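/- arXiv:1506.01820 — 3 statements merged into one kernel-verified Lean document; each statement's English description precedes it below -/
import Mathlib

section
/- Suppose 0 < α ≤ 1 and β > 0 are real numbers such that lim_{z→0} P(αz)/P(z) = β. Then α = 1 and β = 1. -/
set_option maxHeartbeats 1000000


open Complex

theorem stmt_5
    (P : ℂ → ℝ) (q : ℝ → ℝ) (ε₀ : ℝ)
    (hP : ContDiff ℝ (⊤ : ℕ∞) P)
    (hPq : ∀ z : ℂ, P z = q ‖z‖)
    (hq0 : q 0 = 0) (hε₀ : 0 < ε₀)
    (hqmono : StrictMonoOn q (Set.Ico 0 ε₀))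
    (hqconv : ConvexOn ℝ (Set.Ico 0 ε₀) q)
    (hflat : ∀ n : ℕ, Filter.Tendsto (fun z : ℂ => P z / ‖z‖ ^ n)
      (nhdsWithin 0 {0}ᶜ) (nhds 0))
    (α β : ℝ) (hα0 : 0 < α) (hα1 : α ≤ 1) (hβ : 0 < β)
    (hlim : Filter.Tendsto (fun z : ℂ => P ((α : ℂ) * z) / P z)
      (nhdsWithin 0 {0}ᶜ) (nhds β)) :
    α = 1 ∧ β = 1 := by
  -- positivity of q on (0, ε₀)
  have hqpos : ∀ r : ℝ, 0 < r → r < ε₀ → 0 < q r := by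
    intro r hr hrε
    have := hqmono (⟨le_refl 0, hε₀⟩ : (0:ℝ) ∈ Set.Ico 0 ε₀)
      (⟨hr.le, hrε⟩ : r ∈ Set.Ico 0 ε₀) hr
    simpa [hq0] using this
  have hα1' : α = 1 := by
    by_contra hne
    have hαlt : α < 1 := lt_of_le_of_ne hα1 hne
    set r₀ : ℝ := ε₀ / 2 with hr₀def
    have hr₀pos : 0 < r₀ := by positivity
    have hr₀lt : r₀ < ε₀ := by rw [hr₀def]; linarith
    set z : ℕ → ℂ := fun k => ((α ^ k * r₀ : ℝ) : ℂ) with hzdef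
    have hrk_pos : ∀ k, 0 < α ^ k * r₀ := fun k => by positivity
    have hrk_lt : ∀ k, α ^ k * r₀ < ε₀ := by
      intro k
      have h1 : α ^ k ≤ 1 := pow_le_one₀ hα0.le hα1
      nlinarith [hrk_pos k]
    have habs : ∀ k, ‖z k‖ = α ^ k * r₀ := by
      intro k
      simp only [hzdef]
      rw [Complex.norm_real, Real.norm_eq_abs, abs_of_pos (hrk_pos k)]
    have hzne : ∀ k, z k ≠ 0 := fun k =>
      Complex.ofReal_ne_zero.mpr (hrk_pos k).ne'
    have hz0 : Filter.Tendsto z Filter.atTop (nhds 0) := by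
      have h1 : Filter.Tendsto (fun k : ℕ => α ^ k * r₀) Filter.atTop (nhds 0) := by
        simpa using
          (tendsto_pow_atTop_nhds_zero_of_lt_one hα0.le hαlt).mul_const r₀
      have h2 := (Complex.continuous_ofReal.tendsto 0).comp h1
      simpa only [hzdef, Function.comp_def, Complex.ofReal_zero] using h2
    have hztend : Filter.Tendsto z Filter.atTop (nhdsWithin 0 {0}ᶜ) :=
      tendsto_nhdsWithin_of_tendsto_nhds_of_eventually_within _ hz0
        (Filter.Eventually.of_forall fun k => hzne k)
    set a : ℕ → ℝ := fun k => q (α ^ k * r₀) with hadef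
    have haP : ∀ k, P (z k) = a k := by
      intro k; rw [hPq, habs]
    have hapos : ∀ k, 0 < a k := fun k => hqpos _ (hrk_pos k) (hrk_lt k)
    have hstep : ∀ k, (α : ℂ) * z k = z (k + 1) := by
      intro k
      simp only [hzdef]
      push_cast
      ring
    have hratio : Filter.Tendsto (fun k => a (k + 1) / a k) Filter.atTop (nhds β) := by
      have h1 := hlim.comp hztend
      simpa only [Function.comp_def, hstep, haP] using h1
    have hev : ∀ᶠ k in Filter.atTop, β / 2 ≤ a (k + 1) / a k := by
      have h1 : ∀ᶠ k in Filter.atTop, a (k + 1) / a k ∈ Set.Ioi (β / 2) :=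
        hratio.eventually (Ioi_mem_nhds (by linarith))
      filter_upwards [h1] with k hk using le_of_lt hk
    obtain ⟨K, hK⟩ := hev.exists_forall_of_atTop
    have hlow : ∀ m : ℕ, a K * (β / 2) ^ m ≤ a (K + m) := by
      intro m
      induction m with
      | zero => simp
      | succ m ih =>
        have h1 : β / 2 ≤ a (K + m + 1) / a (K + m) := hK (K + m) (Nat.le_add_right K m)
        have h2 : (β / 2) * a (K + m) ≤ a (K + m + 1) := by
          rw [le_div_iff₀ (hapos (K + m))] at h1
          linarith
        calc a K * (β / 2) ^ (m + 1) = (β / 2) * (a K * (β / 2) ^ m) := by ring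
          _ ≤ (β / 2) * a (K + m) := by
              have hb2 : (0:ℝ) < β / 2 := by linarith
              nlinarith
          _ ≤ a (K + m + 1) := h2
    -- pick n with α ^ n < β / 2
    obtain ⟨n, hn⟩ : ∃ n : ℕ, α ^ n < β / 2 := by
      have h1 := (tendsto_pow_atTop_nhds_zero_of_lt_one hα0.le hαlt).eventually
        (eventually_lt_nhds (show (0:ℝ) < β / 2 by linarith))
      exact h1.exists
    -- flatness along the subsequence
    have hflatseq : Filter.Tendsto (fun m => a (K + m) / (α ^ (K + m) * r₀) ^ n)
        Filter.atTop (nhds 0) := by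
      have hKm : Filter.Tendsto (fun m : ℕ => K + m) Filter.atTop Filter.atTop :=
        StrictMono.tendsto_atTop (fun _ _ h => by omega)
      have hsub : Filter.Tendsto (fun m : ℕ => z (K + m)) Filter.atTop (nhdsWithin 0 {0}ᶜ) :=
        hztend.comp hKm
      have h1 := (hflat n).comp hsub
      simpa only [Function.comp_def, haP, habs] using h1
    set C : ℝ := a K / (α ^ K * r₀) ^ n with hCdef
    set ρ : ℝ := (β / 2) / α ^ n with hρdef
    have hCpos : 0 < C := div_pos (hapos K) (by positivity)
    have hρgt : 1 < ρ := by
      rw [hρdef, lt_div_iff₀ (by positivity)]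
      linarith
    have hbound : ∀ m : ℕ, C * ρ ^ m ≤ a (K + m) / (α ^ (K + m) * r₀) ^ n := by
      intro m
      have hden : (α ^ (K + m) * r₀) ^ n = (α ^ K * r₀) ^ n * (α ^ n) ^ m := by
        rw [pow_add, show α ^ K * α ^ m * r₀ = (α ^ K * r₀) * α ^ m by ring, mul_pow,
          ← pow_mul, ← pow_mul, Nat.mul_comm]
      have hCρ : C * ρ ^ m = (a K * (β / 2) ^ m) / ((α ^ K * r₀) ^ n * (α ^ n) ^ m) := by
        rw [hCdef, hρdef, div_pow, div_mul_div_comm]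
      rw [hCρ, hden]
      gcongr
      exact hlow m
    have hinf : Filter.Tendsto (fun m : ℕ => C * ρ ^ m) Filter.atTop Filter.atTop :=
      (tendsto_pow_atTop_atTop_of_one_lt hρgt).const_mul_atTop hCpos
    have htop : Filter.Tendsto (fun m => a (K + m) / (α ^ (K + m) * r₀) ^ n)
        Filter.atTop Filter.atTop :=
      Filter.tendsto_atTop_mono hbound hinf
    exact not_tendsto_nhds_of_tendsto_atTop htop 0 hflatseq
  subst hα1'
  refine ⟨rfl, ?_⟩
  have heq : (fun w : ℂ => P (((1:ℝ) : ℂ) * w) / P w) =ᶠ[nhdsWithin 0 {0}ᶜ]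
      (fun _ => (1 : ℝ)) := by
    have h1 : ∀ᶠ w : ℂ in nhds 0, ‖w‖ < ε₀ := by
      filter_upwards [Metric.ball_mem_nhds (0:ℂ) hε₀] with w hw
      simpa [Complex.dist_eq] using hw
    filter_upwards [h1.filter_mono nhdsWithin_le_nhds, self_mem_nhdsWithin] with w hw hw0
    have hPw : 0 < P w := by
      rw [hPq]
      exact hqpos _ (norm_pos_iff.mpr hw0) hw
    simp [div_self hPw.ne']
  have h1 : Filter.Tendsto (fun _ : ℂ => (1 : ℝ)) (nhdsWithin 0 {0}ᶜ) (nhds β) :=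
    hlim.congr' heq
  exact tendsto_nhds_unique h1 tendsto_const_nhds
end

section
/- Let U be a neighborhood of (0,0) in ℂ² and U₁ a neighborhood of 0 in ℂ. Let a₀₁ ∈ ℂ \ {0}, let b₁₀ > 0 be a positive real number, and let ã₀, b̃₁ be holomorphic on {z₁ ∈ ℂ : Re z₁ < 0} ∩ U₁ and C^∞-smooth on {z₁ : Re z₁ ≤ 0} ∩ U₁, with ã₀ vanishing to order at least 2 at z₁ = 0 (i.e., ã₀(z₁) = O(|z₁|²) as z₁ → 0) and b̃₁(0) = 0. Define f₁(z₁,z₂) = a₀₁ z₁ + ã₀(z₁) and f₂(z₁,z₂) = b₁₀ z₂ + z₂ b̃₁(z₁). If f = (f₁,f₂) maps bΩ_P ∩ U into bΩ_P, i.e., Re f₁(z₁,z₂) + P(f₂(z₁,z₂)) = 0 whenever (z₁,z₂) ∈ U and Re z₁ + P(z₂) = 0, then a₀₁ = 1 and b₁₀ = 1. -/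
open Complex

open Filter Set in
private lemma flat_contra_aux (q : ℝ → ℝ)
    (hflatn : ∀ n : ℕ, Tendsto (fun r : ℝ => q r / r ^ n) (nhdsWithin 0 (Set.Ioi 0)) (nhds 0))
    (r₀ l m : ℝ) (hr₀ : 0 < r₀) (hl0 : 0 < l) (hl1 : l < 1) (hm0 : 0 < m) (_hm1 : m < 1)
    (hq0 : 0 < q r₀) (hstep : ∀ s : ℝ, 0 < s → s ≤ r₀ → m * q s ≤ q (l * s)) : False := by
  obtain ⟨n, hn⟩ := pow_unbounded_of_one_lt (1/m) (show (1:ℝ) < 1/l by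
    rw [lt_div_iff₀ hl0]; linarith)
  have hln : l ^ n < m := by
    have h1 : (1/l:ℝ)^n = 1 / l^n := by rw [one_div, one_div, inv_pow]
    rw [h1, div_lt_div_iff₀ hm0 (pow_pos hl0 n)] at hn
    nlinarith [pow_pos hl0 n]
  have hind : ∀ k : ℕ, m ^ k * q r₀ ≤ q (l ^ k * r₀) := by
    intro k
    induction k with
    | zero => simp
    | succ k ih =>
      have hs : 0 < l ^ k * r₀ := by positivity
      have hs' : l ^ k * r₀ ≤ r₀ := by
        nlinarith [pow_le_one₀ hl0.le hl1.le (n := k)]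
      have := hstep (l ^ k * r₀) hs hs'
      calc m ^ (k+1) * q r₀ = m * (m ^ k * q r₀) := by ring
        _ ≤ m * q (l ^ k * r₀) := by nlinarith
        _ ≤ q (l * (l ^ k * r₀)) := this
        _ = q (l ^ (k+1) * r₀) := by ring_nf
  have hseq : Tendsto (fun k : ℕ => l ^ k * r₀) atTop (nhdsWithin 0 (Set.Ioi 0)) := by
    rw [tendsto_nhdsWithin_iff]
    constructor
    · have := (tendsto_pow_atTop_nhds_zero_of_lt_one hl0.le hl1).mul_const r₀
      simpa using this
    · exact Filter.Eventually.of_forall (fun k => Set.mem_Ioi.mpr (by positivity))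
  have hcomp := (hflatn n).comp hseq
  have hlb : ∀ k : ℕ, q r₀ / r₀ ^ n ≤ q (l ^ k * r₀) / (l ^ k * r₀) ^ n := by
    intro k
    have h1 : m ^ k * q r₀ ≤ q (l ^ k * r₀) := hind k
    have h2 : (l ^ k * r₀) ^ n = (l ^ n) ^ k * r₀ ^ n := by
      rw [mul_pow, ← pow_mul, ← pow_mul, Nat.mul_comm]
    rw [div_le_div_iff₀ (by positivity) (by positivity), h2]
    have h3 : (l^n)^k ≤ m^k := pow_le_pow_left₀ (by positivity) hln.le k
    have h4 : 0 ≤ q (l ^ k * r₀) := le_trans (by positivity) h1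
    calc q r₀ * ((l^n)^k * r₀^n) = ((l^n)^k * q r₀) * r₀ ^ n := by ring
      _ ≤ (m^k * q r₀) * r₀ ^ n := by
          have : (l^n)^k * q r₀ ≤ m^k * q r₀ := by nlinarith
          nlinarith [pow_pos hr₀ n]
      _ ≤ q (l ^ k * r₀) * r₀ ^ n := by nlinarith [pow_pos hr₀ n]
  have hev := hcomp.eventually_lt_const (show (0:ℝ) < q r₀ / r₀ ^ n by positivity)
  obtain ⟨k, hk⟩ := hev.exists
  exact absurd (hlb k) (not_le.mpr hk)

set_option maxHeartbeats 4000000 in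
theorem stmt_6
    (P : ℂ → ℝ) (q : ℝ → ℝ) (ε₀ : ℝ)
    (hP : ContDiff ℝ (⊤ : ℕ∞) P)
    (hPq : ∀ z : ℂ, P z = q (‖z‖))
    (hq0 : q 0 = 0) (hε₀ : 0 < ε₀)
    (hqmono : StrictMonoOn q (Set.Ico 0 ε₀))
    (hqconv : ConvexOn ℝ (Set.Ico 0 ε₀) q)
    (hflat : ∀ n : ℕ, Filter.Tendsto (fun z : ℂ => P z / ‖z‖ ^ n)
      (nhdsWithin 0 {0}ᶜ) (nhds 0))
    (U : Set (ℂ × ℂ)) (hUopen : IsOpen U) (hU0 : ((0 : ℂ), (0 : ℂ)) ∈ U)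
    (U₁ : Set ℂ) (hU₁open : IsOpen U₁) (hU₁0 : (0 : ℂ) ∈ U₁)
    (a₀₁ : ℂ) (ha₀₁ : a₀₁ ≠ 0) (b₁₀ : ℝ) (hb₁₀ : 0 < b₁₀)
    (a₀ b₁ : ℂ → ℂ)
    (ha₀hol : DifferentiableOn ℂ a₀ ({z : ℂ | z.re < 0} ∩ U₁))
    (ha₀sm : ContDiffOn ℝ (⊤ : ℕ∞) a₀ ({z : ℂ | z.re ≤ 0} ∩ U₁))
    (hb₁hol : DifferentiableOn ℂ b₁ ({z : ℂ | z.re < 0} ∩ U₁))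
    (hb₁sm : ContDiffOn ℝ (⊤ : ℕ∞) b₁ ({z : ℂ | z.re ≤ 0} ∩ U₁))
    (ha₀ord : Asymptotics.IsBigO (nhdsWithin 0 {z : ℂ | z.re ≤ 0}) a₀
      (fun z : ℂ => ‖z‖ ^ 2))
    (hb₁0 : b₁ 0 = 0)
    (hbdry : ∀ p : ℂ × ℂ, p ∈ U → p.1.re + P p.2 = 0 →
      (a₀₁ * p.1 + a₀ p.1).re + P ((b₁₀ : ℂ) * p.2 + p.2 * b₁ p.1) = 0) :
    a₀₁ = 1 ∧ b₁₀ = 1 := by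
  classical
  open Filter Set in
  -- ### basic facts about q
  have hP0 : P 0 = 0 := by rw [hPq]; simpa using hq0
  have hqr : ∀ r : ℝ, 0 ≤ r → q r = P (r:ℂ) := by
    intro r hr; rw [hPq, Complex.norm_real, Real.norm_eq_abs, _root_.abs_of_nonneg hr]
  have hqmono' := hqmono.monotoneOn
  have hqpos : ∀ r : ℝ, 0 < r → r < ε₀ → 0 < q r := by
    intro r h0 hlt
    have h := hqmono (Set.mem_Ico.mpr ⟨le_refl 0, hε₀⟩) (Set.mem_Ico.mpr ⟨h0.le, hlt⟩) h0
    rwa [hq0] at h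
  have hqnn : ∀ r : ℝ, 0 ≤ r → r < ε₀ → 0 ≤ q r := by
    intro r h0 hlt
    have h := hqmono' (Set.mem_Ico.mpr ⟨le_refl 0, hε₀⟩) (Set.mem_Ico.mpr ⟨h0, hlt⟩) h0
    rwa [hq0] at h
  have hq0t : Filter.Tendsto q (nhdsWithin 0 (Set.Ioi 0)) (nhds 0) := by
    have h1 : Filter.Tendsto (fun r:ℝ => P (r:ℂ)) (nhds 0) (nhds 0) := by
      have := (hP.continuous.comp Complex.continuous_ofReal).tendsto 0
      simpa [hP0, Function.comp_def] using this
    refine Filter.Tendsto.congr' ?_ (h1.mono_left nhdsWithin_le_nhds)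
    filter_upwards [self_mem_nhdsWithin] with r hr
    exact (hqr r (le_of_lt hr)).symm
  have hflatR : ∀ n : ℕ, Filter.Tendsto (fun r : ℝ => q r / r ^ n)
      (nhdsWithin 0 (Set.Ioi 0)) (nhds 0) := by
    intro n
    have hmap : Filter.Tendsto (fun r : ℝ => (r:ℂ))
        (nhdsWithin 0 (Set.Ioi 0)) (nhdsWithin 0 {0}ᶜ) := by
      rw [tendsto_nhdsWithin_iff]
      constructor
      · simpa using (Complex.continuous_ofReal.tendsto 0).mono_left nhdsWithin_le_nhds
      · filter_upwards [self_mem_nhdsWithin] with r hr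
        simpa using ne_of_gt hr
    refine Filter.Tendsto.congr' ?_ ((hflat n).comp hmap)
    filter_upwards [self_mem_nhdsWithin] with r hr
    simp only [Function.comp_apply]
    rw [Complex.norm_real, Real.norm_eq_abs, abs_of_pos hr, ← hqr r hr.le]
  -- ### the a₀ bound
  obtain ⟨C₀, hC₀⟩ := ha₀ord.bound
  set C : ℝ := max C₀ 0 with hCdef
  have hC : 0 ≤ C := le_max_right _ _
  -- ### Step 1 : a₀₁.im = 0
  have him : a₀₁.im = 0 := by
    have hψ : Filter.Tendsto (fun t:ℝ => (t:ℂ)*Complex.I) (nhds 0)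
        (nhdsWithin 0 {z:ℂ | z.re ≤ 0}) := by
      rw [tendsto_nhdsWithin_iff]
      constructor
      · exact ((Complex.continuous_ofReal.mul continuous_const).tendsto' 0 0 (by simp))
      · exact Filter.Eventually.of_forall (fun t => by simp)
    have hUev : ∀ᶠ t:ℝ in nhds 0, ((t:ℂ)*Complex.I, (0:ℂ)) ∈ U := by
      have hc : Filter.Tendsto (fun t:ℝ => ((t:ℂ)*Complex.I, (0:ℂ))) (nhds 0)
          (nhds ((0:ℂ),(0:ℂ))) := by
        have h1 : Filter.Tendsto (fun t:ℝ => (t:ℂ)*Complex.I) (nhds 0) (nhds 0) := by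
          exact ((Complex.continuous_ofReal.mul continuous_const).tendsto' 0 0 (by simp))
        exact h1.prodMk_nhds tendsto_const_nhds
      exact hc (hUopen.mem_nhds hU0)
    have hev : ∀ᶠ t:ℝ in nhdsWithin 0 (Set.Ioi 0), |a₀₁.im| ≤ C * t := by
      filter_upwards [(hψ.eventually hC₀).filter_mono nhdsWithin_le_nhds,
        hUev.filter_mono nhdsWithin_le_nhds, self_mem_nhdsWithin] with t hbound hU' ht
      have ht0 : (0:ℝ) < t := ht
      have hre0 : ((t:ℂ)*Complex.I).re + P 0 = 0 := by
        simp [hP0]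
      have hb := hbdry ((t:ℂ)*Complex.I, 0) hU' (by simpa using hre0)
      simp only at hb
      have h2 : ((b₁₀:ℂ) * 0 + 0 * b₁ ((t:ℂ)*Complex.I)) = 0 := by ring
      rw [h2, hP0] at hb
      have h3 : (a₀₁ * ((t:ℂ)*Complex.I)).re = -a₀₁.im * t := by
        simp [Complex.mul_re]
      rw [Complex.add_re, h3] at hb
      -- hb : -a₀₁.im * t + (a₀ (t*I)).re + 0 = 0
      have h4 : a₀₁.im * t = (a₀ ((t:ℂ)*Complex.I)).re := by linarith
      have h5 : ‖(t:ℂ)*Complex.I‖ = t := by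
        simp [map_mul, abs_of_pos ht0]
      have h6 : |(a₀ ((t:ℂ)*Complex.I)).re| ≤ C * t^2 := by
        have hnorm : ‖a₀ ((t:ℂ)*Complex.I)‖ ≤ C₀ * t^2 := by
          have hb' := hbound
          rw [h5] at hb'
          have h' : ‖t^2‖ = t^2 := by
            rw [Real.norm_eq_abs, _root_.abs_of_nonneg (by positivity)]
          rwa [h'] at hb'
        calc |(a₀ ((t:ℂ)*Complex.I)).re| ≤ ‖a₀ ((t:ℂ)*Complex.I)‖ :=
              Complex.abs_re_le_norm _
          _ = ‖a₀ ((t:ℂ)*Complex.I)‖ := rfl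
          _ ≤ C₀ * t^2 := hnorm
          _ ≤ C * t^2 := mul_le_mul_of_nonneg_right (le_max_left _ _) (by positivity)
      have h7 : |a₀₁.im| * t ≤ C * t^2 := by
        calc |a₀₁.im| * t = |a₀₁.im * t| := by rw [abs_mul, abs_of_pos ht0]
          _ = |(a₀ ((t:ℂ)*Complex.I)).re| := by rw [h4]
          _ ≤ C * t^2 := h6
      nlinarith
    have htend : Filter.Tendsto (fun t:ℝ => C * t) (nhdsWithin 0 (Set.Ioi 0)) (nhds 0) := by
      have hcont : Continuous fun t:ℝ => C * t := continuous_const.mul continuous_id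
      have := hcont.tendsto 0
      simp only [mul_zero] at this
      exact this.mono_left nhdsWithin_le_nhds
    have := ge_of_tendsto htend hev
    have habs : |a₀₁.im| = 0 := le_antisymm this (abs_nonneg _)
    exact abs_eq_zero.mp habs
  set A : ℝ := a₀₁.re with hAdef
  -- ### the b₁ bound
  have hb₁O : Asymptotics.IsBigO (nhdsWithin 0 ({z:ℂ | z.re ≤ 0} ∩ U₁)) b₁ (fun z => z) := by
    have hd : DifferentiableWithinAt ℝ b₁ ({z:ℂ | z.re ≤ 0} ∩ U₁) 0 :=
      (hb₁sm.differentiableOn (by simp)) 0 ⟨by simp, hU₁0⟩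
    have := hd.hasFDerivWithinAt.isBigO_sub
    simpa [hb₁0] using this
  obtain ⟨L₀, hL₀⟩ := hb₁O.bound
  set L : ℝ := max L₀ 1 with hLdef
  have hL1 : (1:ℝ) ≤ L := le_max_right _ _
  have hL0 : (0:ℝ) < L := lt_of_lt_of_le one_pos hL1
  -- ### the map r ↦ -q r into the boundary set
  have hφt : Filter.Tendsto (fun r:ℝ => ((-q r : ℝ):ℂ)) (nhdsWithin 0 (Set.Ioi 0)) (nhds 0) := by
    have h1 : Filter.Tendsto (fun x:ℝ => ((-x:ℝ):ℂ)) (nhds 0) (nhds 0) := by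
      exact (Complex.continuous_ofReal.comp continuous_neg).tendsto' 0 0 (by simp)
    exact h1.comp hq0t
  have hεev : ∀ᶠ r:ℝ in nhdsWithin 0 (Set.Ioi 0), 2*r < ε₀ ∧ (b₁₀+1)*r < ε₀ := by
    have h1 : Filter.Tendsto (fun r:ℝ => 2*r) (nhdsWithin 0 (Set.Ioi 0)) (nhds 0) := by
      have hcont : Continuous fun x:ℝ => 2 * x := continuous_const.mul continuous_id
      have := hcont.tendsto 0
      simp only [mul_zero] at this
      exact this.mono_left nhdsWithin_le_nhds
    have h2 : Filter.Tendsto (fun r:ℝ => (b₁₀+1)*r) (nhdsWithin 0 (Set.Ioi 0)) (nhds 0) := by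
      have hcont : Continuous fun x:ℝ => (b₁₀+1) * x := continuous_const.mul continuous_id
      have := hcont.tendsto 0
      simp only [mul_zero] at this
      exact this.mono_left nhdsWithin_le_nhds
    exact (h1.eventually_lt_const hε₀).and (h2.eventually_lt_const hε₀)
  have hφ : Filter.Tendsto (fun r:ℝ => ((-q r : ℝ):ℂ)) (nhdsWithin 0 (Set.Ioi 0))
      (nhdsWithin 0 ({z:ℂ | z.re ≤ 0} ∩ U₁)) := by
    rw [tendsto_nhdsWithin_iff]
    refine ⟨hφt, ?_⟩
    filter_upwards [hεev, self_mem_nhdsWithin, hφt (hU₁open.mem_nhds hU₁0)] with r hε hr hU₁'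
    refine ⟨?_, hU₁'⟩
    simp only [Set.mem_setOf_eq, Complex.ofReal_re]
    have : 0 ≤ q r := hqnn r (le_of_lt hr) (by linarith [hε.1])
    linarith
  have hφ' : Filter.Tendsto (fun r:ℝ => ((-q r : ℝ):ℂ)) (nhdsWithin 0 (Set.Ioi 0))
      (nhdsWithin 0 {z:ℂ | z.re ≤ 0}) :=
    hφ.mono_right (nhdsWithin_mono 0 Set.inter_subset_left)
  -- U membership eventuality
  have hpU : ∀ᶠ r:ℝ in nhdsWithin 0 (Set.Ioi 0), (((-q r : ℝ):ℂ), (r:ℂ)) ∈ U := by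
    have hc : Filter.Tendsto (fun r:ℝ => (((-q r : ℝ):ℂ), (r:ℂ))) (nhdsWithin 0 (Set.Ioi 0))
        (nhds ((0:ℂ),(0:ℂ))) := by
      refine Filter.Tendsto.prodMk_nhds hφt ?_
      simpa using ((Complex.continuous_ofReal.tendsto 0).mono_left nhdsWithin_le_nhds)
    exact hc (hUopen.mem_nhds hU0)
  -- smallness of q r along the filter
  have hqsmall : ∀ᶠ r:ℝ in nhdsWithin 0 (Set.Ioi 0),
      L * q r ≤ 1/2 ∧ C * q r ≤ A/2 ∨ True := Filter.Eventually.of_forall (fun _ => Or.inr trivial)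
  -- ### the main equation, eventually
  have hmain : ∀ᶠ r:ℝ in nhdsWithin 0 (Set.Ioi 0),
      0 < r ∧ 2*r < ε₀ ∧ (b₁₀+1)*r < ε₀ ∧ 0 < q r ∧ L * q r ≤ 1 ∧ C * q r ≤ 1 ∧
      ‖b₁ ((-q r : ℝ):ℂ)‖ ≤ L * q r ∧
      |(a₀ ((-q r : ℝ):ℂ)).re| ≤ C * (q r)^2 ∧
      q (r * ‖(b₁₀:ℂ) + b₁ ((-q r : ℝ):ℂ)‖) =
        A * q r - (a₀ ((-q r : ℝ):ℂ)).re := by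
    have hsm1 : ∀ᶠ r:ℝ in nhdsWithin 0 (Set.Ioi 0), L * q r ≤ 1 ∧ C * q r ≤ 1 := by
      have h1 : Filter.Tendsto (fun r:ℝ => L * q r) (nhdsWithin 0 (Set.Ioi 0)) (nhds 0) := by
        simpa using hq0t.const_mul L
      have h2 : Filter.Tendsto (fun r:ℝ => C * q r) (nhdsWithin 0 (Set.Ioi 0)) (nhds 0) := by
        simpa using hq0t.const_mul C
      exact ((h1.eventually_le_const one_pos)).and (h2.eventually_le_const one_pos)
    filter_upwards [self_mem_nhdsWithin, hεev, hsm1, hφ.eventually hL₀, hφ'.eventually hC₀,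
      hpU] with r hr hε hsm hLb hCb hU'
    have hr0 : (0:ℝ) < r := hr
    have hrε : r < ε₀ := by linarith [hε.1]
    have hq_pos : 0 < q r := hqpos r hr0 hrε
    have habsφ : ‖((-q r : ℝ):ℂ)‖ = q r := by
      rw [Complex.norm_real, Real.norm_eq_abs, abs_of_nonpos (by linarith)]
      ring
    refine ⟨hr0, hε.1, hε.2, hq_pos, hsm.1, hsm.2, ?_, ?_, ?_⟩
    · -- b₁ bound
      have : ‖b₁ ((-q r : ℝ):ℂ)‖ ≤ L₀ * ‖((-q r : ℝ):ℂ)‖ := hLb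
      rw [habsφ] at this
      refine le_trans this (mul_le_mul_of_nonneg_right (le_max_left _ _) hq_pos.le)
    · -- a₀ bound
      have h1 : ‖a₀ ((-q r : ℝ):ℂ)‖ ≤ C₀ * ‖‖((-q r : ℝ):ℂ)‖ ^ 2‖ := hCb
      rw [habsφ] at h1
      have h2 : ‖(q r)^2‖ = (q r)^2 := by
        rw [Real.norm_eq_abs, _root_.abs_of_nonneg (by positivity)]
      rw [h2] at h1
      calc |(a₀ ((-q r : ℝ):ℂ)).re| ≤ ‖a₀ ((-q r : ℝ):ℂ)‖ :=
            Complex.abs_re_le_norm _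
        _ = ‖a₀ ((-q r : ℝ):ℂ)‖ := rfl
        _ ≤ C₀ * (q r)^2 := h1
        _ ≤ C * (q r)^2 := mul_le_mul_of_nonneg_right (le_max_left _ _) (by positivity)
    · -- the equation
      have hre : (((-q r : ℝ):ℂ)).re + P (r:ℂ) = 0 := by
        rw [← hqr r hr0.le]
        simp
      have hb := hbdry (((-q r : ℝ):ℂ), (r:ℂ)) hU' hre
      simp only at hb
      have h3 : ((b₁₀:ℂ) * (r:ℂ) + (r:ℂ) * b₁ ((-q r : ℝ):ℂ)) =
          (r:ℂ) * ((b₁₀:ℂ) + b₁ ((-q r : ℝ):ℂ)) := by ring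
      rw [h3, hPq, norm_mul, Complex.norm_real, Real.norm_eq_abs, abs_of_pos hr0] at hb
      have h4 : (a₀₁ * ((-q r : ℝ):ℂ)).re = A * (-q r) := by
        simp [Complex.mul_re, hAdef]
      rw [Complex.add_re, h4] at hb
      linarith
  -- ### A > 0
  have hqmem : ∀ r:ℝ, 0 < r → (b₁₀+1)*r < ε₀ → L * q r ≤ 1 →
      ‖b₁ ((-q r : ℝ):ℂ)‖ ≤ L * q r →
      r * ‖(b₁₀:ℂ) + b₁ ((-q r : ℝ):ℂ)‖ < ε₀ ∧
      0 ≤ r * ‖(b₁₀:ℂ) + b₁ ((-q r : ℝ):ℂ)‖ := by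
    intro r hr0 hbε hsm habs
    have hub : ‖(b₁₀:ℂ) + b₁ ((-q r : ℝ):ℂ)‖ ≤ b₁₀ + 1 := by
      calc ‖(b₁₀:ℂ) + b₁ ((-q r : ℝ):ℂ)‖
          ≤ ‖(b₁₀:ℂ)‖ + ‖b₁ ((-q r : ℝ):ℂ)‖ := norm_add_le _ _
        _ = |b₁₀| + ‖b₁ ((-q r : ℝ):ℂ)‖ := by rw [Complex.norm_real, Real.norm_eq_abs]
        _ ≤ b₁₀ + 1 := by rw [_root_.abs_of_pos hb₁₀]; linarith
    refine ⟨?_, by positivity⟩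
    calc r * ‖(b₁₀:ℂ) + b₁ ((-q r : ℝ):ℂ)‖ ≤ r * (b₁₀ + 1) :=
          mul_le_mul_of_nonneg_left hub hr0.le
      _ < ε₀ := by linarith [hbε]
  have hA0 : 0 < A := by
    have hAne : A ≠ 0 := by
      intro h
      apply ha₀₁
      rw [Complex.ext_iff]
      constructor
      · simpa [hAdef] using h
      · simpa using him
    have hAnn : 0 ≤ A := by
      have hev : ∀ᶠ r:ℝ in nhdsWithin 0 (Set.Ioi 0), -(C * q r) ≤ A := by
        filter_upwards [hmain] with r hm
        obtain ⟨hr0, h2ε, hbε, hqp, hL1r, hC1r, hb, ha, heq⟩ := hm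
        have hmem := hqmem r hr0 hbε hL1r hb
        have hqc0 : 0 ≤ q (r * ‖(b₁₀:ℂ) + b₁ ((-q r : ℝ):ℂ)‖) :=
          hqnn _ hmem.2 hmem.1
        have habs := abs_le.mp ha
        have h1 : -(C * q r) * q r ≤ A * q r := by nlinarith
        exact le_of_mul_le_mul_right h1 hqp
      have htend : Filter.Tendsto (fun r:ℝ => -(C * q r)) (nhdsWithin 0 (Set.Ioi 0))
          (nhds 0) := by
        have := (hq0t.const_mul C).neg
        simpa using this
      exact le_of_tendsto htend hev
    exact lt_of_le_of_ne hAnn (Ne.symm hAne)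
  -- ### b₁₀ = 1
  have hb1 : b₁₀ = 1 := by
    by_contra hne
    rcases lt_or_gt_of_ne hne with hlt|hgt
    · -- case b₁₀ < 1
      have hlam0 : 0 < (1+b₁₀)/2 := by linarith
      have hlam1 : (1+b₁₀)/2 < 1 := by linarith
      have hm0 : 0 < min (A/2) (1/2) := lt_min (by linarith) one_half_pos
      have hm1 : min (A/2) (1/2) < 1 := lt_of_le_of_lt (min_le_right _ _) (by norm_num)
      have hsm2 : ∀ᶠ r:ℝ in nhdsWithin 0 (Set.Ioi 0),
          L * q r ≤ (1-b₁₀)/2 ∧ C * q r ≤ A/2 := by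
        have h1 := (hq0t.const_mul L)
        have h2 := (hq0t.const_mul C)
        simp only [mul_zero] at h1 h2
        exact (h1.eventually_le_const (by linarith)).and
          (h2.eventually_le_const (by linarith))
      have hstepev : ∀ᶠ r:ℝ in nhdsWithin 0 (Set.Ioi 0),
          (min (A/2) (1/2) * q r ≤ q ((1+b₁₀)/2 * r)) ∧ 0 < q r := by
        filter_upwards [hmain, hsm2] with r hm hsm2
        obtain ⟨hr0, h2ε, hbε, hqp, hL1r, hC1r, hb, ha, heq⟩ := hm
        refine ⟨?_, hqp⟩
        have hmem := hqmem r hr0 hbε hL1r hb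
        have hclam : ‖(b₁₀:ℂ) + b₁ ((-q r : ℝ):ℂ)‖ ≤ (1+b₁₀)/2 := by
          calc ‖(b₁₀:ℂ) + b₁ ((-q r : ℝ):ℂ)‖
              ≤ ‖(b₁₀:ℂ)‖ + ‖b₁ ((-q r : ℝ):ℂ)‖ :=
                norm_add_le _ _
            _ ≤ |b₁₀| + L * q r := by linarith [(Complex.norm_real b₁₀).trans (Real.norm_eq_abs b₁₀), hb]
            _ ≤ b₁₀ + (1-b₁₀)/2 := by rw [_root_.abs_of_pos hb₁₀]; linarith [hsm2.1]
            _ = (1+b₁₀)/2 := by ring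
        have hrε : r < ε₀ := by linarith
        have hle1 : r * ‖(b₁₀:ℂ) + b₁ ((-q r : ℝ):ℂ)‖ ≤ (1+b₁₀)/2 * r := by
          have := mul_le_mul_of_nonneg_left hclam hr0.le
          linarith [this]
        have hlt2 : (1+b₁₀)/2 * r < ε₀ := by nlinarith
        have h1 : q (r * ‖(b₁₀:ℂ) + b₁ ((-q r : ℝ):ℂ)‖) ≤ q ((1+b₁₀)/2 * r) :=
          hqmono' (Set.mem_Ico.mpr ⟨hmem.2, hmem.1⟩)
            (Set.mem_Ico.mpr ⟨by positivity, hlt2⟩) hle1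
        have habs := abs_le.mp ha
        have hmin := min_le_left (A/2) (1/2)
        have hqc0 : 0 ≤ q (r * ‖(b₁₀:ℂ) + b₁ ((-q r : ℝ):ℂ)‖) :=
          hqnn _ hmem.2 hmem.1
        have hkey1 : C * q r * q r ≤ A/2 * q r := mul_le_mul_of_nonneg_right hsm2.2 hqp.le
        have hkey2 : min (A/2) (1/2) * q r ≤ A/2 * q r := mul_le_mul_of_nonneg_right hmin hqp.le
        nlinarith [habs.1, habs.2]
      obtain ⟨u, hu, hsub⟩ := mem_nhdsGT_iff_exists_Ioc_subset.mp (Filter.eventually_iff.mp hstepev)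
      exact flat_contra_aux q hflatR u ((1+b₁₀)/2) (min (A/2) (1/2)) hu hlam0 hlam1 hm0 hm1
        (hsub ⟨hu, le_refl u⟩).2 (fun s hs0 hsu => (hsub ⟨hs0, hsu⟩).1)
    · -- case b₁₀ > 1
      have hLam1 : 1 < (1+b₁₀)/2 := by linarith
      have hLam0 : 0 < (1+b₁₀)/2 := by linarith
      have hM1 : 1 < A + 1 := by linarith
      have hsm2 : ∀ᶠ r:ℝ in nhdsWithin 0 (Set.Ioi 0), L * q r ≤ (b₁₀-1)/2 := by
        have h1 := (hq0t.const_mul L)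
        simp only [mul_zero] at h1
        exact h1.eventually_le_const (by linarith)
      have hstepev : ∀ᶠ r:ℝ in nhdsWithin 0 (Set.Ioi 0),
          (q ((1+b₁₀)/2 * r) ≤ (A+1) * q r) ∧ 0 < q r := by
        filter_upwards [hmain, hsm2] with r hm hsm2
        obtain ⟨hr0, h2ε, hbε, hqp, hL1r, hC1r, hb, ha, heq⟩ := hm
        refine ⟨?_, hqp⟩
        have hmem := hqmem r hr0 hbε hL1r hb
        have hclam : (1+b₁₀)/2 ≤ ‖(b₁₀:ℂ) + b₁ ((-q r : ℝ):ℂ)‖ := by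
          have h1 : ‖(b₁₀:ℂ)‖ - ‖-(b₁ ((-q r : ℝ):ℂ))‖ ≤ ‖(b₁₀:ℂ) - -(b₁ ((-q r : ℝ):ℂ))‖ :=
            norm_sub_norm_le _ _
          rw [sub_neg_eq_add, norm_neg] at h1
          rw [Complex.norm_real, Real.norm_eq_abs, _root_.abs_of_pos hb₁₀] at h1
          linarith [hb]
        have h1 : q ((1+b₁₀)/2 * r) ≤ q (r * ‖(b₁₀:ℂ) + b₁ ((-q r : ℝ):ℂ)‖) := by
          refine hqmono' (Set.mem_Ico.mpr ⟨by positivity, ?_⟩)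
            (Set.mem_Ico.mpr ⟨hmem.2, hmem.1⟩) (by nlinarith)
          nlinarith [hmem.1]
        have habs := abs_le.mp ha
        nlinarith
      obtain ⟨u, hu, hsub⟩ := mem_nhdsGT_iff_exists_Ioc_subset.mp (Filter.eventually_iff.mp hstepev)
      have hl0' : 0 < 1/((1+b₁₀)/2) := by positivity
      have hl1' : 1/((1+b₁₀)/2) < 1 := by rw [div_lt_one hLam0]; linarith
      have hm0' : 0 < 1/(A+1) := by positivity
      have hm1' : 1/(A+1) < 1 := by rw [div_lt_one (by linarith)]; linarith
      refine flat_contra_aux q hflatR u (1/((1+b₁₀)/2)) (1/(A+1)) hu hl0' hl1' hm0' hm1'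
        (hsub ⟨hu, le_refl u⟩).2 ?_
      intro s hs0 hsu
      have hts : 0 < s * (2/(1+b₁₀)) := by positivity
      have htu : s * (2/(1+b₁₀)) ≤ u := by
        have : s * (2/(1+b₁₀)) < s := by
          nlinarith [mul_lt_mul_of_pos_left (show 2/(1+b₁₀) < 1 by
            rw [div_lt_one (by linarith)]; linarith) hs0]
        linarith
      have hkey := (hsub ⟨hts, htu⟩).1
      have heqarg : (1+b₁₀)/2 * (s * (2/(1+b₁₀))) = s := by field_simp
      rw [heqarg] at hkey
      -- hkey : q s ≤ (A+1) * q (s * (2/(1+b₁₀)))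
      have heqarg2 : (1/((1+b₁₀)/2)) * s = s * (2/(1+b₁₀)) := by field_simp
      rw [heqarg2]
      have hqnn2 : 0 ≤ q (s * (2/(1+b₁₀))) := by
        have := (hsub ⟨hts, htu⟩).2
        linarith
      rw [div_mul_eq_mul_div, div_le_iff₀ (by linarith : (0:ℝ) < A+1)]
      linarith [hkey]
  -- ### A = 1
  have hA1 : A = 1 := by
    have hδsmall : ∀ᶠ r:ℝ in nhdsWithin 0 (Set.Ioi 0), L * q r ≤ 1/2 := by
      have h1 := hq0t.const_mul L
      simp only [mul_zero] at h1
      exact h1.eventually_le_const (by norm_num)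
    have h2rt : Filter.Tendsto (fun r:ℝ => 2*r) (nhdsWithin 0 (Set.Ioi 0))
        (nhdsWithin 0 (Set.Ioi 0)) := by
      rw [tendsto_nhdsWithin_iff]
      constructor
      · have hcont : Continuous fun x:ℝ => 2*x := continuous_const.mul continuous_id
        have := hcont.tendsto 0
        simp only [mul_zero] at this
        exact this.mono_left nhdsWithin_le_nhds
      · filter_upwards [self_mem_nhdsWithin] with r hr
        exact Set.mem_Ioi.mpr (by linarith [Set.mem_Ioi.mp hr])
    have hq2t : Filter.Tendsto (fun r:ℝ => q (2*r)) (nhdsWithin 0 (Set.Ioi 0)) (nhds 0) :=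
      hq0t.comp h2rt
    have hub : ∀ᶠ r:ℝ in nhdsWithin 0 (Set.Ioi 0), A ≤ 1 + (2*L*q (2*r) + C*q r) := by
      filter_upwards [hmain, hδsmall] with r hm hδ
      obtain ⟨hr0, h2ε, hbε, hqp, hL1r, hC1r, hb, ha, heq⟩ := hm
      have hmem := hqmem r hr0 hbε hL1r hb
      have hδ0 : 0 < L * q r := mul_pos hL0 hqp
      have hc_ub : ‖(b₁₀:ℂ) + b₁ ((-q r : ℝ):ℂ)‖ ≤ 1 + L * q r := by
        have h1 : ‖(b₁₀:ℂ) + b₁ ((-q r : ℝ):ℂ)‖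
            ≤ ‖(b₁₀:ℂ)‖ + ‖b₁ ((-q r : ℝ):ℂ)‖ := norm_add_le _ _
        rw [Complex.norm_real, Real.norm_eq_abs, _root_.abs_of_pos hb₁₀] at h1
        linarith [hb, hb1.le, hb1.ge]
      set δ := L * q r with hδdef
      have hyub : r * (1+δ) < 2*r := by nlinarith
      have hymem_lt : r * (1+δ) < ε₀ := by linarith
      have h1 : q (r * ‖(b₁₀:ℂ) + b₁ ((-q r : ℝ):ℂ)‖) ≤ q (r*(1+δ)) := by
        refine hqmono' (Set.mem_Ico.mpr ⟨hmem.2, hmem.1⟩)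
          (Set.mem_Ico.mpr ⟨by positivity, hymem_lt⟩) ?_
        nlinarith [hc_ub]
      have hxy : r < r*(1+δ) := by nlinarith
      have hslope := hqconv.slope_mono_adjacent (Set.mem_Ico.mpr ⟨hr0.le, by linarith⟩)
        (Set.mem_Ico.mpr ⟨by linarith, h2ε⟩) hxy hyub
      rw [div_le_div_iff₀ (by linarith) (by linarith)] at hslope
      have hq2nn : 0 ≤ q (2*r) := hqnn _ (by linarith) h2ε
      have hynn : 0 ≤ q (r*(1+δ)) := hqnn _ (by positivity) hymem_lt
      have hupper : q (r*(1+δ)) ≤ q r + 2*δ*q (2*r) := by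
        rcases le_or_gt (q (r*(1+δ))) (q r) with hcase|hcase
        · nlinarith [mul_nonneg hδ0.le hq2nn]
        · nlinarith [hslope, mul_pos hr0 hδ0, mul_pos (sub_pos.mpr hcase) hr0]
      have habs := abs_le.mp ha
      have hfin : A * q r ≤ (1 + (2*L*q (2*r) + C*q r)) * q r := by nlinarith [habs.2]
      exact le_of_mul_le_mul_right hfin hqp
    have hlb : ∀ᶠ r:ℝ in nhdsWithin 0 (Set.Ioi 0), 1 - (L*q (2*r) + C*q r) ≤ A := by
      filter_upwards [hmain, hδsmall] with r hm hδ
      obtain ⟨hr0, h2ε, hbε, hqp, hL1r, hC1r, hb, ha, heq⟩ := hm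
      have hmem := hqmem r hr0 hbε hL1r hb
      have hδ0 : 0 < L * q r := mul_pos hL0 hqp
      have hc_lb : 1 - L * q r ≤ ‖(b₁₀:ℂ) + b₁ ((-q r : ℝ):ℂ)‖ := by
        have h1 : ‖(b₁₀:ℂ)‖ - ‖-(b₁ ((-q r : ℝ):ℂ))‖ ≤ ‖(b₁₀:ℂ) - -(b₁ ((-q r : ℝ):ℂ))‖ :=
          norm_sub_norm_le _ _
        rw [sub_neg_eq_add, norm_neg] at h1
        rw [Complex.norm_real, Real.norm_eq_abs, _root_.abs_of_pos hb₁₀] at h1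
        linarith [hb, hb1.le, hb1.ge]
      set δ := L * q r with hδdef
      have hx0 : 0 < r*(1-δ) := by nlinarith
      have hxr : r*(1-δ) < r := by nlinarith
      have h1 : q (r*(1-δ)) ≤ q (r * ‖(b₁₀:ℂ) + b₁ ((-q r : ℝ):ℂ)‖) := by
        refine hqmono' (Set.mem_Ico.mpr ⟨hx0.le, by linarith⟩)
          (Set.mem_Ico.mpr ⟨hmem.2, hmem.1⟩) ?_
        nlinarith [hc_lb]
      have hslope := hqconv.slope_mono_adjacent (Set.mem_Ico.mpr ⟨hx0.le, by linarith⟩)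
        (Set.mem_Ico.mpr ⟨by linarith, h2ε⟩) hxr (by linarith : r < 2*r)
      rw [div_le_div_iff₀ (by nlinarith) (by linarith)] at hslope
      have hq2nn : 0 ≤ q (2*r) := hqnn _ (by linarith) h2ε
      have hxnn : 0 ≤ q (r*(1-δ)) := hqnn _ hx0.le (by linarith)
      have hlow : q r - δ*q (2*r) ≤ q (r*(1-δ)) := by
        nlinarith [hslope, mul_pos hr0 hδ0, hqp]
      have habs := abs_le.mp ha
      have hfin : (1 - (L*q (2*r) + C*q r)) * q r ≤ A * q r := by nlinarith [habs.1]
      exact le_of_mul_le_mul_right hfin hqp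
    have htu : Filter.Tendsto (fun r:ℝ => 1 + (2*L*q (2*r) + C*q r))
        (nhdsWithin 0 (Set.Ioi 0)) (nhds 1) := by
      have h := (hq2t.const_mul (2*L)).add (hq0t.const_mul C)
      simp only [mul_zero, add_zero] at h
      have h2 := (tendsto_const_nhds (x := (1:ℝ)) (f := nhdsWithin 0 (Set.Ioi 0))).add h
      simpa using h2
    have htl : Filter.Tendsto (fun r:ℝ => 1 - (L*q (2*r) + C*q r))
        (nhdsWithin 0 (Set.Ioi 0)) (nhds 1) := by
      have h := (hq2t.const_mul L).add (hq0t.const_mul C)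
      simp only [mul_zero, add_zero] at h
      have h2 := (tendsto_const_nhds (x := (1:ℝ)) (f := nhdsWithin 0 (Set.Ioi 0))).sub h
      simpa using h2
    have hle : A ≤ 1 := ge_of_tendsto htu hub
    have hge : 1 ≤ A := le_of_tendsto htl hlb
    linarith
  refine ⟨?_, hb1⟩
  rw [Complex.ext_iff]
  simp [← hAdef, hA1, him]
end

section
/- Let 0 < r < ε₀ and set U = {(z₁,z₂) ∈ ℂ² : |z₁| < r, |z₂| < r}. Let δ ∈ ℝ and let g be holomorphic on Ω_P ∩ U with g not identically zero, satisfying g(z₁,z₂) = e^{iδt}·g(z₁, e^{it}z₂) for all (z₁,z₂) ∈ Ω_P ∩ U and all t ∈ ℝ. Then there exist n ∈ ℕ and a holomorphic function b on {z₁ ∈ ℂ : Re z₁ < 0, |z₁| < r}, not identically zero, such that δ = −n and g(z₁,z₂) = b(z₁)·z₂ⁿ for all (z₁,z₂) ∈ Ω_P ∩ U. -/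
open Complex

open scoped NNReal ENNReal

lemma ofScalars_coeff (a : ℕ → ℂ) (n : ℕ) :
    (FormalMultilinearSeries.ofScalars ℂ a).coeff n = a n := by
  simp [FormalMultilinearSeries.ofScalars, FormalMultilinearSeries.coeff,
    ContinuousMultilinearMap.mkPiAlgebraFin_apply, List.prod_ofFn]

lemma coeffs_zero (a : ℕ → ℂ) (ρ : ℝ≥0) (hρ : 0 < ρ)
    (hsummable : Summable fun k => ‖a k‖ * (ρ : ℝ) ^ k)
    (hsum : ∀ w : ℂ, ‖w‖ < (ρ : ℝ) → HasSum (fun k => a k * w ^ k) 0) :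
    ∀ k, a k = 0 := by
  set q := FormalMultilinearSeries.ofScalars ℂ a with hq
  have hrad : (ρ : ℝ≥0∞) ≤ q.radius := by
    apply q.le_radius_of_summable_norm
    simpa [hq, ofScalars_coeff] using hsummable
  have hball : HasFPowerSeriesOnBall (fun _ : ℂ => (0 : ℂ)) q 0 ρ := by
    refine ⟨hrad, by exact_mod_cast hρ, ?_⟩
    intro y hy
    have hy' : ‖y‖ < (ρ : ℝ) := by
      rw [mem_emetric_ball_zero_iff] at hy
      exact_mod_cast hy
    have := hsum y hy'
    simp only [hq, FormalMultilinearSeries.apply_eq_pow_smul_coeff, ofScalars_coeff,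
      smul_eq_mul]
    convert this using 2 with k
    · rfl
    ring
  have hq0 : q = 0 := hball.hasFPowerSeriesAt.eq_zero
  intro k
  have h2 : q k = 0 := by rw [hq0]; rfl
  exact (FormalMultilinearSeries.ofScalars_eq_zero ℂ k).mp h2

theorem stmt_9
    (P : ℂ → ℝ) (q : ℝ → ℝ) (ε₀ : ℝ)
    (hP : ContDiff ℝ (⊤ : ℕ∞) P)
    (hPq : ∀ z : ℂ, P z = q (‖z‖))
    (hq0 : q 0 = 0) (hε₀ : 0 < ε₀)
    (hqmono : StrictMonoOn q (Set.Ico 0 ε₀))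
    (hqconv : ConvexOn ℝ (Set.Ico 0 ε₀) q)
    (hflat : ∀ n : ℕ, Filter.Tendsto (fun z : ℂ => P z / ‖z‖ ^ n)
      (nhdsWithin 0 {0}ᶜ) (nhds 0))
    (r : ℝ) (hr0 : 0 < r) (hrε₀ : r < ε₀)
    (δ : ℝ) (g : ℂ × ℂ → ℂ)
    (hghol : DifferentiableOn ℂ g
      ({p : ℂ × ℂ | p.1.re + P p.2 < 0} ∩
        {p : ℂ × ℂ | ‖p.1‖ < r ∧ ‖p.2‖ < r}))
    (hgne : ∃ p ∈ {p : ℂ × ℂ | p.1.re + P p.2 < 0} ∩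
        {p : ℂ × ℂ | ‖p.1‖ < r ∧ ‖p.2‖ < r}, g p ≠ 0)
    (hrot : ∀ p ∈ {p : ℂ × ℂ | p.1.re + P p.2 < 0} ∩
        {p : ℂ × ℂ | ‖p.1‖ < r ∧ ‖p.2‖ < r}, ∀ t : ℝ,
      g p = Complex.exp (Complex.I * (δ : ℂ) * (t : ℂ)) *
        g (p.1, Complex.exp (Complex.I * (t : ℂ)) * p.2)) :
    ∃ n : ℕ, ∃ b : ℂ → ℂ,
      DifferentiableOn ℂ b {z : ℂ | z.re < 0 ∧ ‖z‖ < r} ∧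
      (∃ z ∈ {z : ℂ | z.re < 0 ∧ ‖z‖ < r}, b z ≠ 0) ∧
      δ = -(n : ℝ) ∧
      ∀ p ∈ {p : ℂ × ℂ | p.1.re + P p.2 < 0} ∩
        {p : ℂ × ℂ | ‖p.1‖ < r ∧ ‖p.2‖ < r},
        g p = b p.1 * p.2 ^ n := by
  classical
  have hPcont : Continuous P := hP.continuous
  have hP0 : P 0 = 0 := by rw [hPq, norm_zero, hq0]
  have hPnonneg : ∀ w : ℂ, ‖w‖ < ε₀ → 0 ≤ P w := by
    intro w hw
    rw [hPq]
    rcases (norm_nonneg w).eq_or_lt with h | h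
    · rw [← h, hq0]
    · exact hq0 ▸ (hqmono ⟨le_refl 0, hε₀⟩ ⟨norm_nonneg w, hw⟩ h).le
  set Ω : Set (ℂ × ℂ) := {p : ℂ × ℂ | p.1.re + P p.2 < 0} ∩
    {p : ℂ × ℂ | ‖p.1‖ < r ∧ ‖p.2‖ < r} with hΩdef
  have hΩopen : IsOpen Ω := by
    refine IsOpen.inter (isOpen_lt ((Complex.continuous_re.comp continuous_fst).add
      (hPcont.comp continuous_snd)) continuous_const) ?_
    rw [Set.setOf_and]
    exact (isOpen_lt (continuous_norm.comp continuous_fst) continuous_const).inter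
      (isOpen_lt (continuous_norm.comp continuous_snd) continuous_const)
  have hg_at : ∀ p ∈ Ω, DifferentiableAt ℂ g p :=
    fun p hp => hghol.differentiableAt (hΩopen.mem_nhds hp)
  have hreΩ : ∀ p ∈ Ω, p.1.re < 0 := by
    intro p hp
    have h1 : p.1.re + P p.2 < 0 := hp.1
    have h2 : 0 ≤ P p.2 := hPnonneg p.2 (lt_trans hp.2.2 hrε₀)
    linarith
  -- the slice lemma
  have slice : ∀ z₁ : ℂ, z₁.re < 0 → ‖z₁‖ < r →
      (∀ w : ℂ, ‖w‖ < r → z₁.re + P w < 0 → g (z₁, w) = 0) ∨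
      ∃ k : ℕ, δ = -(k : ℝ) ∧ ∃ c : ℂ, ∀ w : ℂ, ‖w‖ < r → z₁.re + P w < 0 →
        g (z₁, w) = c * w ^ k := by
    intro z₁ hz1re hz1abs
    set S : Set ℂ := {w : ℂ | ‖w‖ < r ∧ z₁.re + P w < 0} with hSdef
    have hSopen : IsOpen S := by
      rw [hSdef, Set.setOf_and]
      exact (isOpen_lt continuous_norm continuous_const).inter
        (isOpen_lt (continuous_const.add hPcont) continuous_const)
    have h0S : (0 : ℂ) ∈ S := ⟨by simpa using hr0, by rw [hP0]; simpa using hz1re⟩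
    have hmem : ∀ w ∈ S, (z₁, w) ∈ Ω := fun w hw => ⟨hw.2, hz1abs, hw.1⟩
    have hdiff : DifferentiableOn ℂ (fun w => g (z₁, w)) S := by
      intro w hw
      exact ((hg_at _ (hmem w hw)).comp w
        ((differentiableAt_const z₁).prodMk differentiableAt_id)).differentiableWithinAt
    obtain ⟨p, hpAt⟩ := hdiff.analyticAt (hSopen.mem_nhds h0S)
    obtain ⟨ρ, hpb⟩ := hpAt
    obtain ⟨ε, hε0, hεS⟩ := Metric.isOpen_iff.mp hSopen 0 h0S
    obtain ⟨ρ', hρ'pos, hρ'lt⟩ := ENNReal.lt_iff_exists_nnreal_btwn.mp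
      (lt_min hpb.r_pos (ENNReal.ofReal_pos.mpr hε0))
    have hρ'ρ : (ρ' : ℝ≥0∞) < ρ := hρ'lt.trans_le (min_le_left _ _)
    have hρ'ε : (ρ' : ℝ) < ε := by
      have h := hρ'lt.trans_le (min_le_right _ _)
      rwa [← ENNReal.ofReal_coe_nnreal, ENNReal.ofReal_lt_ofReal_iff hε0] at h
    have hρ'nn : 0 < ρ' := by exact_mod_cast hρ'pos
    have hρ'0 : 0 < (ρ' : ℝ) := by exact_mod_cast hρ'nn
    have hwS : ∀ w : ℂ, ‖w‖ < (ρ' : ℝ) → w ∈ S := fun w hw =>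
      hεS (by rw [Metric.mem_ball, dist_zero_right]; exact hw.trans hρ'ε)
    have haux : ∀ w : ℂ, ‖w‖ < (ρ' : ℝ) → (‖w‖₊ : ℝ≥0∞) < ρ := by
      intro w hw
      have h1 : ‖w‖₊ < ρ' := by exact_mod_cast hw
      exact (ENNReal.coe_lt_coe.mpr h1).trans hρ'ρ
    have hrep : ∀ w : ℂ, (‖w‖₊ : ℝ≥0∞) < ρ →
        HasSum (fun k => p.coeff k * w ^ k) (g (z₁, w)) := by
      intro w hw
      have h := hpb.hasSum (by rwa [mem_emetric_ball_zero_iff])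
      simp only [FormalMultilinearSeries.apply_eq_pow_smul_coeff, smul_eq_mul, zero_add] at h
      convert h using 2 with k
      · rfl
      ring
    have key : ∀ k : ℕ, p.coeff k ≠ 0 → δ = -(k : ℝ) := by
      intro k hk
      have hrel : ∀ t : ℝ, Complex.exp (Complex.I * (δ : ℂ) * (t : ℂ)) *
          Complex.exp (Complex.I * (t : ℂ)) ^ k = 1 := by
        intro t
        set E := Complex.exp (Complex.I * (δ : ℂ) * (t : ℂ)) with hE
        set c := Complex.exp (Complex.I * (t : ℂ)) with hc
        have hEnorm : ‖E‖ = 1 := by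
          rw [hE, Complex.norm_exp]; norm_num [Complex.mul_re]
        have hcnorm : ‖c‖ = 1 := by
          rw [hc, Complex.norm_exp]; norm_num [Complex.mul_re]
        set a : ℕ → ℂ := fun j => (1 - E * c ^ j) * p.coeff j with ha
        have h0 : ∀ j, a j = 0 := by
          apply coeffs_zero a ρ' hρ'nn
          · apply Summable.of_nonneg_of_le (fun j => by positivity)
              (fun j => ?_) ((p.summable_norm_mul_pow (hρ'ρ.trans_le hpb.r_le)).mul_left 2)
            have hb1 : ‖a j‖ ≤ 2 * ‖p j‖ := by
              rw [ha]
              simp only []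
              rw [norm_mul]
              have h2 : ‖(1 : ℂ) - E * c ^ j‖ ≤ 2 := by
                calc ‖(1 : ℂ) - E * c ^ j‖ ≤ ‖(1 : ℂ)‖ + ‖E * c ^ j‖ := norm_sub_le _ _
                _ = 2 := by rw [norm_mul, norm_pow, hEnorm, hcnorm]; norm_num
              have h3 : ‖p.coeff j‖ = ‖p j‖ := (p.norm_apply_eq_norm_coef).symm
              calc ‖(1 : ℂ) - E * c ^ j‖ * ‖p.coeff j‖ ≤ 2 * ‖p.coeff j‖ :=
                mul_le_mul_of_nonneg_right h2 (norm_nonneg _)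
              _ = 2 * ‖p j‖ := by rw [h3]
            calc ‖a j‖ * (ρ' : ℝ) ^ j ≤ 2 * ‖p j‖ * (ρ' : ℝ) ^ j :=
              mul_le_mul_of_nonneg_right hb1 (by positivity)
            _ = 2 * (‖p j‖ * (ρ' : ℝ) ^ j) := by ring
          · intro w hw
            have s1 := hrep w (haux w hw)
            have hcw : ‖c * w‖ < (ρ' : ℝ) := by rwa [norm_mul, hcnorm, one_mul]
            have s2 := (hrep (c * w) (haux _ hcw)).mul_left E
            have feq : g (z₁, w) = E * g (z₁, c * w) := hrot (z₁, w) (hmem w (hwS w hw)) t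
            rw [← feq] at s2
            have s3 := s1.sub s2
            rw [sub_self] at s3
            convert s3 using 2 with j
            · rfl
            rw [ha]
            simp only []
            rw [mul_pow]
            ring
        have h4 := h0 k
        rw [ha] at h4
        simp only [] at h4
        rcases mul_eq_zero.mp h4 with h5 | h5
        · have := sub_eq_zero.mp h5
          exact this.symm
        · exact absurd h5 hk
      by_contra hne
      have hδk : δ + (k : ℝ) ≠ 0 := fun h => hne (by linarith)
      have ht := hrel (Real.pi / (δ + (k : ℝ)))
      rw [← Complex.exp_nat_mul, ← Complex.exp_add] at ht
      have hexp : Complex.I * (δ : ℂ) * ((Real.pi / (δ + (k : ℝ)) : ℝ) : ℂ) +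
          (k : ℕ) * (Complex.I * ((Real.pi / (δ + (k : ℝ)) : ℝ) : ℂ)) =
          (Real.pi : ℂ) * Complex.I := by
        have hc' : ((δ : ℂ) + (k : ℂ)) ≠ 0 := by
          have := Complex.ofReal_ne_zero.mpr hδk
          push_cast at this
          exact this
        push_cast
        field_simp
      rw [hexp, Complex.exp_pi_mul_I] at ht
      norm_num at ht
    -- preconnectedness of S
    have hpre : IsPreconnected S := by
      apply isPreconnected_of_forall (0 : ℂ)
      intro y hy
      refine ⟨segment ℝ 0 y, ?_, left_mem_segment ℝ 0 y, right_mem_segment ℝ 0 y,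
        (convex_segment (0 : ℂ) y).isPreconnected⟩
      intro z hz
      rw [segment_eq_image] at hz
      obtain ⟨θ, hθ, hzθ⟩ := hz
      have hzy : z = θ • y := by rw [← hzθ]; simp
      have habs : ‖z‖ ≤ ‖y‖ := by
        rw [hzy, norm_smul]
        have : |θ| ≤ 1 := abs_le.mpr ⟨by linarith [hθ.1], hθ.2⟩
        calc |θ| * ‖y‖ ≤ 1 * ‖y‖ := mul_le_mul_of_nonneg_right this (norm_nonneg _)
        _ = ‖y‖ := one_mul _
      refine ⟨lt_of_le_of_lt habs hy.1, ?_⟩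
      have hq : q (‖z‖) ≤ q (‖y‖) :=
        hqmono.monotoneOn ⟨norm_nonneg _, lt_trans (lt_of_le_of_lt habs hy.1) hrε₀⟩
          ⟨norm_nonneg _, lt_trans hy.1 hrε₀⟩ habs
      have h2 : z₁.re + P y < 0 := hy.2
      rw [hPq] at h2 ⊢
      linarith
    have han1 : AnalyticOnNhd ℂ (fun w => g (z₁, w)) S := hdiff.analyticOnNhd hSopen
    by_cases hex : ∃ k, p.coeff k ≠ 0
    · obtain ⟨n, hn⟩ := hex
      right
      refine ⟨n, key n hn, p.coeff n, ?_⟩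
      have hothers : ∀ j, j ≠ n → p.coeff j = 0 := by
        intro j hj
        by_contra hcj
        have h1 := key j hcj
        have h2 := key n hn
        rw [h1] at h2
        exact hj (by exact_mod_cast neg_injective h2)
      have hnear : ∀ w : ℂ, ‖w‖ < (ρ' : ℝ) → g (z₁, w) = p.coeff n * w ^ n := by
        intro w hw
        have s1 := hrep w (haux w hw)
        have s2 : HasSum (fun j => p.coeff j * w ^ j) (p.coeff n * w ^ n) :=
          hasSum_single n (fun j hj => by rw [hothers j hj, zero_mul])
        exact s1.unique s2
      have han2 : AnalyticOnNhd ℂ (fun w => p.coeff n * w ^ n) S :=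
        (((differentiable_pow n).const_mul _).differentiableOn).analyticOnNhd hSopen
      have heq : Set.EqOn (fun w => g (z₁, w)) (fun w => p.coeff n * w ^ n) S := by
        apply han1.eqOn_of_preconnected_of_eventuallyEq han2 hpre h0S
        filter_upwards [Metric.ball_mem_nhds (0 : ℂ) hρ'0] with w hw
        exact hnear w (by rwa [Metric.mem_ball, dist_zero_right] at hw)
      intro w hw1 hw2
      exact heq ⟨hw1, hw2⟩
    · left
      push_neg at hex
      have hnear : ∀ w : ℂ, ‖w‖ < (ρ' : ℝ) → g (z₁, w) = 0 := by
        intro w hw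
        have s1 := hrep w (haux w hw)
        have s2 : HasSum (fun j => p.coeff j * w ^ j) 0 := by
          have : (fun j => p.coeff j * w ^ j) = fun _ => (0 : ℂ) := by
            funext j; rw [hex j, zero_mul]
          rw [this]
          exact hasSum_zero
        exact s1.unique s2
      have han2 : AnalyticOnNhd ℂ (fun _ : ℂ => (0 : ℂ)) S :=
        (differentiable_const (0 : ℂ)).differentiableOn.analyticOnNhd hSopen
      have heq : Set.EqOn (fun w => g (z₁, w)) (fun _ => (0 : ℂ)) S := by
        apply han1.eqOn_of_preconnected_of_eventuallyEq han2 hpre h0S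
        filter_upwards [Metric.ball_mem_nhds (0 : ℂ) hρ'0] with w hw
        exact hnear w (by rwa [Metric.mem_ball, dist_zero_right] at hw)
      intro w hw1 hw2
      exact heq ⟨hw1, hw2⟩
  -- main assembly
  obtain ⟨p₀, hp₀, hgp₀⟩ := hgne
  have hp₀Ω : p₀ ∈ Ω := hp₀
  have hp₀1re : p₀.1.re < 0 := hreΩ p₀ hp₀Ω
  by_cases hδcase : ∃ n : ℕ, δ = -(n : ℝ)
  · obtain ⟨n, hδn⟩ := hδcase
    have hA : ∀ z₁ : ℂ, z₁.re < 0 ∧ ‖z₁‖ < r →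
        ∃ c : ℂ, ∀ w : ℂ, ‖w‖ < r → z₁.re + P w < 0 → g (z₁, w) = c * w ^ n := by
      intro z₁ hz
      rcases slice z₁ hz.1 hz.2 with hzero | ⟨k, hk, c, hc⟩
      · exact ⟨0, fun w h1 h2 => by rw [hzero w h1 h2, zero_mul]⟩
      · have hkn : k = n := by
          have h : -(k : ℝ) = -(n : ℝ) := by rw [← hk, hδn]
          exact_mod_cast neg_injective h
        exact ⟨c, hkn ▸ hc⟩
    set b : ℂ → ℂ := fun z₁ =>
      if h : z₁.re < 0 ∧ ‖z₁‖ < r then Classical.choose (hA z₁ h) else 0 with hbdef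
    have hb : ∀ z₁ : ℂ, (z₁.re < 0 ∧ ‖z₁‖ < r) → ∀ w : ℂ,
        ‖w‖ < r → z₁.re + P w < 0 → g (z₁, w) = b z₁ * w ^ n := by
      intro z₁ h w h1 h2
      have : b z₁ = Classical.choose (hA z₁ h) := by rw [hbdef]; simp only [dif_pos h]
      rw [this]
      exact Classical.choose_spec (hA z₁ h) w h1 h2
    refine ⟨n, b, ?_, ?_, hδn, ?_⟩
    · intro z₁ hz₁
      have hz₁' : z₁.re < 0 ∧ ‖z₁‖ < r := hz₁
      have hopen2 : IsOpen {w : ℂ | P w < -z₁.re} := isOpen_lt hPcont continuous_const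
      obtain ⟨ε, hε0, hεP⟩ := Metric.isOpen_iff.mp hopen2 0
        (by simp only [Set.mem_setOf_eq, hP0]; linarith [hz₁'.1])
      set s₀ : ℝ := min ε r / 2 with hs₀def
      have hs₀pos : 0 < s₀ := by positivity
      set w₀ : ℂ := (s₀ : ℂ) with hw₀def
      have hw₀abs : ‖w₀‖ = s₀ := by
        rw [hw₀def, Complex.norm_real, Real.norm_eq_abs, abs_of_pos hs₀pos]
      have hw₀r : ‖w₀‖ < r := by
        rw [hw₀abs]
        have : s₀ < r := by
          have := min_le_right ε r
          simp only [hs₀def]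
          linarith [min_le_right ε r]
        exact this
      have hw₀ne : w₀ ≠ 0 := by
        rw [hw₀def]
        exact_mod_cast ne_of_gt hs₀pos
      have hPw₀ : P w₀ < -z₁.re := by
        apply hεP
        rw [Metric.mem_ball, dist_zero_right, hw₀def, Complex.norm_real,
          Real.norm_eq_abs, abs_of_pos hs₀pos]
        have := min_le_left ε r
        simp only [hs₀def]
        linarith [min_le_left ε r]
      have hPw₀nonneg : 0 ≤ P w₀ := hPnonneg w₀ (lt_trans hw₀r hrε₀)
      set V : Set ℂ := {z : ℂ | ‖z‖ < r ∧ z.re < -P w₀} with hVdef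
      have hVopen : IsOpen V := by
        rw [hVdef, Set.setOf_and]
        exact (isOpen_lt continuous_norm continuous_const).inter
          (isOpen_lt Complex.continuous_re continuous_const)
      have hz₁V : z₁ ∈ V := ⟨hz₁'.2, by linarith [hz₁'.1, hPw₀]⟩
      have hφdiff : DifferentiableAt ℂ (fun z => g (z, w₀) * (w₀ ^ n)⁻¹) z₁ := by
        have hmem : (z₁, w₀) ∈ Ω := ⟨by
          simp only [Set.mem_setOf_eq]
          have := hz₁V.2
          linarith, hz₁'.2, hw₀r⟩
        exact ((hg_at _ hmem).comp z₁
          (differentiableAt_id.prodMk (differentiableAt_const w₀))).mul_const _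
      have hbeq : b =ᶠ[nhds z₁] fun z => g (z, w₀) * (w₀ ^ n)⁻¹ := by
        filter_upwards [hVopen.mem_nhds hz₁V] with z hz
        have hz2 : z.re < 0 := by
          have := hz.2
          linarith [hPw₀nonneg]
        have := hb z ⟨hz2, hz.1⟩ w₀ hw₀r (by linarith [hz.2])
        rw [this]
        field_simp
      exact (hφdiff.congr_of_eventuallyEq hbeq).differentiableWithinAt
    · refine ⟨p₀.1, ⟨hp₀1re, hp₀Ω.2.1⟩, ?_⟩
      intro h0
      apply hgp₀
      have h := hb p₀.1 ⟨hp₀1re, hp₀Ω.2.1⟩ p₀.2 hp₀Ω.2.2 hp₀Ω.1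
      rw [Prod.mk.eta] at h
      rw [h, h0, zero_mul]
    · intro p hp
      have hpΩ : p ∈ Ω := hp
      have h := hb p.1 ⟨hreΩ p hpΩ, hpΩ.2.1⟩ p.2 hpΩ.2.2 hpΩ.1
      rwa [Prod.mk.eta] at h
  · exfalso
    rcases slice p₀.1 hp₀1re hp₀Ω.2.1 with hzero | ⟨k, hk, _⟩
    · apply hgp₀
      have := hzero p₀.2 hp₀Ω.2.2 hp₀Ω.1
      rwa [Prod.mk.eta] at this
    · exact hδcase ⟨k, hk⟩
end
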